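/- Let ℓ ≥ 1 be an integer and K a field with q^ℓ elements containing F_q as a subfield. For every integer i with 1 ≤ i ≤ n, the number of codewords of Hamming weight i in the lifted code over K of C equals ∑_{j=1}^{k} A_i^{(j)} · (q^ℓ − 1)(q^ℓ − q)⋯(q^ℓ − q^{j−1}), where A_i^{(j)} = q^{(u−t)(k−j−t)} · [k−u, k−j−t]_q · [u, t]_q if n − i = q^{k−j} − q^t for some integer t with max(0, u−j) ≤ t ≤ u, and A_i^{(j)} = 0 if no such t exists. -/

import Mathlib

set_option linter.unusedSectionVars false

open Matrix Module

/-- The Gaussian binomial coefficient `[n, m]_q`. -/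
def gbinom (q : ℕ) (n m : ℤ) : ℕ :=
  if 0 ≤ m ∧ m ≤ n then
    (∏ i ∈ Finset.range m.toNat, (q ^ n.toNat - q ^ i)) /
      (∏ i ∈ Finset.range m.toNat, (q ^ m.toNat - q ^ i))
  else 0

section Fib
variable {α β : Type*} [Finite α]

def fib_equiv (g : α → β) (P : α → Prop) (Q : β → Prop) (h : ∀ a, P a → Q (g a)) :
    {a // P a} ≃ Σ b : {b // Q b}, {a // P a ∧ g a = b.1} where
  toFun a := ⟨⟨g a.1, h a.1 a.2⟩, ⟨a.1, a.2, rfl⟩⟩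
  invFun p := ⟨p.2.1, p.2.2.1⟩
  left_inv a := rfl
  right_inv p := by
    obtain ⟨⟨b, hb⟩, a, ha, h2⟩ := p
    dsimp only at h2 ⊢
    subst h2
    rfl

lemma card_fiberwise [Finite β] (g : α → β) (P : α → Prop) (Q : β → Prop)
    (h : ∀ a, P a → Q (g a)) (c : ℕ)
    (hf : ∀ b, Q b → Nat.card {a // P a ∧ g a = b} = c) :
    Nat.card {a // P a} = Nat.card {b // Q b} * c := by
  classical
  have : Fintype {b // Q b} := Fintype.ofFinite _
  have : ∀ b : {b // Q b}, Fintype {a // P a ∧ g a = b.1} := fun b => Fintype.ofFinite _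
  calc Nat.card {a // P a} = Nat.card (Σ b : {b // Q b}, {a // P a ∧ g a = b.1}) :=
        Nat.card_congr (fib_equiv g P Q h)
    _ = ∑ b : {b // Q b}, Nat.card {a // P a ∧ g a = b.1} := by
        rw [Nat.card_eq_fintype_card, Fintype.card_sigma]
        exact Finset.sum_congr rfl fun b _ => (Nat.card_eq_fintype_card).symm
    _ = ∑ _b : {b // Q b}, c := Finset.sum_congr rfl fun b _ => hf b.1 b.2
    _ = Nat.card {b // Q b} * c := by
        rw [Finset.sum_const, Nat.card_eq_fintype_card, Finset.card_univ, smul_eq_mul]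

end Fib

lemma gbinom_nat (q a b : ℕ) (h : b ≤ a) :
    gbinom q (a : ℤ) (b : ℤ) =
      (∏ i ∈ Finset.range b, (q ^ a - q ^ i)) / (∏ i ∈ Finset.range b, (q ^ b - q ^ i)) := by
  simp [gbinom, h, Int.toNat_natCast]

section Grass
variable {F : Type} [Field F] [Fintype F] {V : Type*} [AddCommGroup V] [Module F V] [Finite V]

instance : Finite (Submodule F V) :=
  Finite.of_injective (fun W => (W : Set V)) SetLike.coe_injective

lemma prod_pos (q m : ℕ) (hq : 1 < q) : 0 < ∏ s ∈ Finset.range m, (q ^ m - q ^ s) := by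
  apply Finset.prod_pos
  intro s hs
  have := Nat.pow_lt_pow_right hq (Finset.mem_range.mp hs)
  omega

lemma card_grass (m : ℕ) (hm : m ≤ finrank F V) :
    Nat.card {W : Submodule F V // finrank F W = m} *
      ∏ s ∈ Finset.range m, (Fintype.card F ^ m - Fintype.card F ^ s) =
    ∏ s ∈ Finset.range m, (Fintype.card F ^ finrank F V - Fintype.card F ^ s) := by
  classical
  simp only [← Fin.prod_univ_eq_prod_range]
  rw [← card_linearIndependent (K := F) (V := V) hm]
  refine (card_fiberwise (fun s : Fin m → V => Submodule.span F (Set.range s))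
    (fun s => LinearIndependent F s) (fun W => finrank F W = m) ?_ _ ?_).symm
  · intro s hs
    rw [finrank_span_eq_card hs, Fintype.card_fin]
  · intro W hW
    have e : {s : Fin m → V // LinearIndependent F s ∧ Submodule.span F (Set.range s) = W} ≃
        {s : Fin m → W // LinearIndependent F s} := by
      refine ⟨fun s => ⟨fun i => ⟨s.1 i, ?_⟩, ?_⟩, fun s => ⟨fun i => (s.1 i : V), ?_, ?_⟩, ?_, ?_⟩
      · have h2 : Submodule.span F (Set.range s.1) ≤ W := le_of_eq s.2.2
        exact h2 (Submodule.subset_span (Set.mem_range_self i))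
      · exact LinearIndependent.of_comp W.subtype s.2.1
      · exact s.2.map' W.subtype (Submodule.ker_subtype W)
      · refine Submodule.eq_of_le_of_finrank_le ?_ ?_
        · rw [Submodule.span_le]; rintro - ⟨i, rfl⟩; exact (s.1 i).2
        · have hli : LinearIndependent F (fun i => ((s.1 i : V))) :=
            s.2.map' W.subtype (Submodule.ker_subtype W)
          rw [finrank_span_eq_card hli, Fintype.card_fin, hW]
      · intro s; ext i; rfl
      · intro s; ext i; rfl
    rw [Nat.card_congr e, card_linearIndependent (by rw [hW]), hW]

lemma card_grass' (m : ℕ) (hm : m ≤ finrank F V) (hq : 1 < Fintype.card F) :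
    Nat.card {W : Submodule F V // finrank F W = m} =
      gbinom (Fintype.card F) (finrank F V : ℤ) (m : ℤ) := by
  rw [gbinom_nat _ _ _ hm]
  exact (Nat.div_eq_of_eq_mul_left (prod_pos _ m hq) (card_grass m hm).symm).symm

end Grass

variable {F : Type} [Field F] [Fintype F]
variable {V : Type*} [AddCommGroup V] [Module F V] [Finite V]
variable {W : Type*} [AddCommGroup W] [Module F W] [Finite W]

lemma card_inj_maps :
    Nat.card {g : V →ₗ[F] W // Function.Injective g} =
      ∏ s ∈ Finset.range (finrank F V), (Fintype.card F ^ finrank F W - Fintype.card F ^ s) := by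
  classical
  set m := finrank F V with hm
  let b : Basis (Fin m) F V := Module.finBasis F V
  have e2 : {g : V →ₗ[F] W // Function.Injective g} ≃ {s : Fin m → W // LinearIndependent F s} := by
    refine ⟨fun g => ⟨g.1 ∘ b, b.linearIndependent.map' g.1 (LinearMap.ker_eq_bot.2 g.2)⟩,
      fun s => ⟨b.constr F s.1, ?_⟩, fun g => Subtype.ext (b.ext fun i => ?_), fun s => Subtype.ext (funext fun i => ?_)⟩
    · rw [← LinearMap.ker_eq_bot, LinearMap.ker_eq_bot']
      intro x hx
      rw [← b.sum_repr x] at hx ⊢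
      rw [map_sum] at hx
      simp only [_root_.map_smul, Basis.constr_basis] at hx
      have := Fintype.linearIndependent_iff.mp s.2 _ hx
      simp [this]
    · simp [Basis.constr_basis]
    · simp [Basis.constr_basis]
  rw [Nat.card_congr e2]
  by_cases hle : m ≤ finrank F W
  · rw [card_linearIndependent hle, ← Fin.prod_univ_eq_prod_range]
  · have hempty : IsEmpty {s : Fin m → W // LinearIndependent F s} := by
      refine ⟨fun s => hle ?_⟩
      simpa using s.2.fintype_card_le_finrank
    rw [Nat.card_of_isEmpty]
    refine (Finset.prod_eq_zero (Finset.mem_range.mpr (by omega : finrank F W < m)) ?_).symm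
    exact Nat.sub_self _

lemma card_ker_maps (U : Submodule F V) :
    Nat.card {f : V →ₗ[F] W // LinearMap.ker f = U} =
      ∏ s ∈ Finset.range (finrank F V - finrank F U),
        (Fintype.card F ^ finrank F W - Fintype.card F ^ s) := by
  classical
  have e1 : {f : V →ₗ[F] W // LinearMap.ker f = U} ≃
      {g : (V ⧸ U) →ₗ[F] W // Function.Injective g} := by
    have : Finite (V ⧸ U) := Quotient.finite _
    refine ⟨fun f => ⟨U.liftQ f.1 (le_of_eq f.2.symm), ?_⟩,
      fun g => ⟨g.1 ∘ₗ U.mkQ, ?_⟩, fun f => Subtype.ext (U.liftQ_mkQ f.1 _), fun g => Subtype.ext ?_⟩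
    · rw [← LinearMap.ker_eq_bot]
      exact U.ker_liftQ_eq_bot _ _ (le_of_eq f.2)
    · rw [LinearMap.ker_comp, LinearMap.ker_eq_bot.2 g.2, Submodule.comap_bot, Submodule.ker_mkQ]
    · exact Submodule.linearMap_qext _ (U.liftQ_mkQ _ _)
  have : Finite (V ⧸ U) := Quotient.finite _
  rw [Nat.card_congr e1, card_inj_maps]
  have h1 := Submodule.finrank_quotient_add_finrank U
  rw [Nat.eq_sub_of_add_eq h1]

lemma finrank_comap_subtype (p : Submodule F V) (s : Submodule F V) :
    finrank F (Submodule.comap p.subtype s) = finrank F (p ⊓ s : Submodule F V) := by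
  rw [← Submodule.map_comap_subtype, Submodule.finrank_map_subtype_eq]

lemma finrank_map_add_inf_ker (f : V →ₗ[F] W) (p : Submodule F V) :
    finrank F (p.map f) + finrank F (p ⊓ LinearMap.ker f : Submodule F V) = finrank F p := by
  have h := LinearMap.finrank_range_add_finrank_ker (f ∘ₗ p.subtype)
  rw [LinearMap.range_comp, Submodule.range_subtype, LinearMap.ker_comp,
    finrank_comap_subtype] at h
  exact h

lemma card_fiber_compl (S' : Submodule F V) (D : Submodule F (V ⧸ S')) (m : ℕ)
    (hD : finrank F D = m) :
    Nat.card {W : Submodule F V // (finrank F W = m ∧ W ⊓ S' = ⊥) ∧ W.map S'.mkQ = D} =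
      Fintype.card F ^ (finrank F S' * m) := by
  classical
  have hfinQ : Finite (V ⧸ S') := Quotient.finite _
  obtain ⟨σ, hσ⟩ := LinearMap.exists_rightInverse_of_surjective S'.mkQ S'.range_mkQ
  have hσ' : ∀ y : V ⧸ S', S'.mkQ (σ y) = y := fun y => congrArg (fun f => f y) hσ
  set gf : (D →ₗ[F] S') → (D →ₗ[F] V) :=
    fun f => σ ∘ₗ D.subtype + S'.subtype ∘ₗ f with hgf
  have p1 : ∀ (f : D →ₗ[F] S') (d : D), S'.mkQ (gf f d) = (d : V ⧸ S') := by
    intro f d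
    have h0 : S'.mkQ ((f d : V)) = 0 := by
      rw [← LinearMap.mem_ker, Submodule.ker_mkQ]; exact (f d).2
    have hsplit : (gf f) d = σ (d : V ⧸ S') + ((f d : V)) := rfl
    rw [hsplit, map_add, hσ', h0, add_zero]
  have inj : ∀ f : D →ₗ[F] S', Function.Injective (gf f) := by
    intro f a b hab
    have : ((a : V ⧸ S')) = (b : V ⧸ S') := by rw [← p1 f a, ← p1 f b, hab]
    exact Subtype.ext this
  have comp_eq : ∀ f : D →ₗ[F] S', S'.mkQ ∘ₗ (gf f) = D.subtype :=
    fun f => LinearMap.ext fun d => p1 f d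
  set Φ : (D →ₗ[F] S') → {W : Submodule F V //
      (finrank F W = m ∧ W ⊓ S' = ⊥) ∧ W.map S'.mkQ = D} := fun f =>
    ⟨LinearMap.range (gf f), by
      refine ⟨⟨?_, ?_⟩, ?_⟩
      · rw [LinearMap.finrank_range_of_inj (inj f), hD]
      · rw [eq_bot_iff]
        intro x hx
        obtain ⟨hx1, hx2⟩ := Submodule.mem_inf.mp hx
        obtain ⟨d, rfl⟩ := hx1
        have hz : (d : V ⧸ S') = 0 := by
          rw [← p1 f d, Submodule.mkQ_apply, Submodule.Quotient.mk_eq_zero]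
          exact hx2
        have hd0 : d = 0 := Subtype.ext (by simpa using hz)
        simp [hd0]
      · rw [← LinearMap.range_comp, comp_eq f, Submodule.range_subtype]⟩
  have hbij : Function.Bijective Φ := by
    constructor
    · intro f f' hff'
      have hr : LinearMap.range (gf f) = LinearMap.range (gf f') := Subtype.ext_iff.mp hff'
      refine LinearMap.ext fun d => ?_
      obtain ⟨d', hd'⟩ : (gf f d) ∈ LinearMap.range (gf f') := hr ▸ LinearMap.mem_range_self _ d
      have hdd : d' = d := by
        have h3 := congrArg S'.mkQ hd'
        rw [p1, p1] at h3
        exact Subtype.ext h3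
      rw [hdd] at hd'
      have : (f' d : V) = f d := by
        have h2 := hd'
        simp only [hgf, LinearMap.add_apply, LinearMap.comp_apply, Submodule.subtype_apply] at h2
        exact (add_right_injective _ h2)
      exact Subtype.ext this.symm
    · rintro ⟨W, ⟨hW1, hW2⟩, hW3⟩
      have hmem : ∀ x : W, S'.mkQ (W.subtype x) ∈ D := by
        intro x
        rw [← hW3]
        exact Submodule.mem_map_of_mem x.2
      set h0 : W →ₗ[F] D := LinearMap.codRestrict D (S'.mkQ ∘ₗ W.subtype) hmem with hh0
      have h0inj : Function.Injective h0 := by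
        intro a b hab
        have h1 : S'.mkQ ((a : V) - b) = 0 := by
          have := Subtype.ext_iff.mp hab
          simp only [hh0, LinearMap.codRestrict_apply, LinearMap.comp_apply,
            Submodule.subtype_apply] at this
          rw [map_sub, this, sub_self]
        rw [← LinearMap.mem_ker, Submodule.ker_mkQ] at h1
        have : ((a : V) - b) ∈ W ⊓ S' := ⟨sub_mem a.2 b.2, h1⟩
        rw [hW2] at this
        exact Subtype.ext (by simpa [sub_eq_zero] using this)
      have h0surj : Function.Surjective h0 := by
        rintro ⟨d, hd⟩
        rw [← hW3] at hd
        obtain ⟨w, hw, hwd⟩ := hd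
        exact ⟨⟨w, hw⟩, Subtype.ext (by simpa [hh0] using hwd)⟩
      set e : W ≃ₗ[F] D := LinearEquiv.ofBijective h0 ⟨h0inj, h0surj⟩ with he
      have hcoe : ∀ x : W, ((e x : V ⧸ S')) = S'.mkQ (x : V) := fun x => rfl
      have hmemS : ∀ d : D, ((e.symm d : V) - σ d) ∈ S' := by
        intro d
        have hz : S'.mkQ ((e.symm d : V) - σ (d : V ⧸ S')) = 0 := by
          rw [map_sub, hσ', ← hcoe, e.apply_symm_apply, sub_self]
        rwa [Submodule.mkQ_apply, Submodule.Quotient.mk_eq_zero] at hz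
      set f : D →ₗ[F] S' := LinearMap.codRestrict S'
        ((W.subtype ∘ₗ e.symm.toLinearMap) - (σ ∘ₗ D.subtype)) (fun d => hmemS d) with hf
      refine ⟨f, ?_⟩
      have hgfW : gf f = W.subtype ∘ₗ e.symm.toLinearMap := by
        ext d
        have hfd : ((f d : S') : V) = (e.symm d : V) - σ d := rfl
        simp only [hgf, hfd, LinearMap.add_apply, LinearMap.comp_apply, Submodule.subtype_apply,
          LinearMap.codRestrict_apply, LinearMap.sub_apply, LinearEquiv.coe_coe]
        abel
      apply Subtype.ext
      show LinearMap.range (gf f) = W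
      rw [hgfW, LinearMap.range_comp, LinearEquiv.range, Submodule.map_top,
        Submodule.range_subtype]
  rw [← Nat.card_eq_of_bijective Φ hbij]
  have hfinH : Finite (D →ₗ[F] S') :=
    Finite.of_injective (fun f => (f : D → S')) (DFunLike.coe_injective)
  have : Fintype (D →ₗ[F] S') := Fintype.ofFinite _
  rw [Nat.card_eq_fintype_card, card_eq_pow_finrank (K := F) (V := D →ₗ[F] S'),
    finrank_linearMap, hD, mul_comm m]


lemma card_compl (S' : Submodule F V) (m : ℕ) (hm : m + finrank F S' ≤ finrank F V)
    (hq : 1 < Fintype.card F) :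
    Nat.card {W : Submodule F V // finrank F W = m ∧ W ⊓ S' = ⊥} =
      Fintype.card F ^ (finrank F S' * m) *
        gbinom (Fintype.card F) ((finrank F V - finrank F S' : ℕ) : ℤ) (m : ℤ) := by
  classical
  have hfinQ : Finite (V ⧸ S') := Quotient.finite _
  have hfinS : Finite (Submodule F V) :=
    Finite.of_injective (fun W => (W : Set V)) SetLike.coe_injective
  have hfinS2 : Finite (Submodule F (V ⧸ S')) :=
    Finite.of_injective (fun W => (W : Set (V ⧸ S'))) SetLike.coe_injective
  have hquot : finrank F (V ⧸ S') = finrank F V - finrank F S' :=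
    Nat.eq_sub_of_add_eq (Submodule.finrank_quotient_add_finrank S')
  have key := card_fiberwise (fun W : Submodule F V => W.map S'.mkQ)
    (fun W => finrank F W = m ∧ W ⊓ S' = ⊥) (fun D => finrank F D = m)
    (fun W hW => by
      have h := finrank_map_add_inf_ker S'.mkQ W
      rw [Submodule.ker_mkQ, hW.2, finrank_bot, hW.1, add_zero] at h
      exact h)
    (Fintype.card F ^ (finrank F S' * m))
    (fun D hD => card_fiber_compl S' D m hD)
  rw [key, card_grass' m (by rw [hquot]; omega) hq, hquot, mul_comm]


lemma card_inter (Su : Submodule F V) (w t : ℕ) (hq : 1 < Fintype.card F)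
    (htu : t ≤ finrank F Su) (htw : t ≤ w)
    (hwu : w + finrank F Su ≤ finrank F V + t) :
    Nat.card {W : Submodule F V //
        finrank F W = w ∧ finrank F (W ⊓ Su : Submodule F V) = t} =
      Fintype.card F ^ ((finrank F Su - t) * (w - t)) *
        gbinom (Fintype.card F) ((finrank F V - finrank F Su : ℕ) : ℤ) ((w - t : ℕ) : ℤ) *
        gbinom (Fintype.card F) ((finrank F Su : ℕ) : ℤ) ((t : ℕ) : ℤ) := by
  classical
  have key := card_fiberwise (fun W : Submodule F V => W ⊓ Su)
    (fun W => finrank F W = w ∧ finrank F (W ⊓ Su : Submodule F V) = t)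
    (fun A => A ≤ Su ∧ finrank F A = t)
    (fun W hW => ⟨inf_le_right, hW.2⟩)
    (Fintype.card F ^ ((finrank F Su - t) * (w - t)) *
      gbinom (Fintype.card F) ((finrank F V - finrank F Su : ℕ) : ℤ) ((w - t : ℕ) : ℤ))
    ?_
  · rw [key]
    have base : Nat.card {A : Submodule F V // A ≤ Su ∧ finrank F A = t} =
        gbinom (Fintype.card F) ((finrank F Su : ℕ) : ℤ) ((t : ℕ) : ℤ) := by
      have e : {A : Submodule F V // A ≤ Su ∧ finrank F A = t} ≃
          {A' : Submodule F Su // finrank F A' = t} := by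
        refine ⟨fun A => ⟨Submodule.comap Su.subtype A.1, ?_⟩,
          fun A' => ⟨Submodule.map Su.subtype A'.1, Submodule.map_subtype_le _ _, ?_⟩, ?_, ?_⟩
        · rw [finrank_comap_subtype, inf_eq_right.mpr A.2.1]; exact A.2.2
        · rw [Submodule.finrank_map_subtype_eq]; exact A'.2
        · intro A
          apply Subtype.ext
          show Submodule.map Su.subtype (Submodule.comap Su.subtype A.1) = A.1
          rw [Submodule.map_comap_subtype, inf_eq_right.mpr A.2.1]
        · intro A'
          apply Subtype.ext
          show Submodule.comap Su.subtype (Submodule.map Su.subtype A'.1) = A'.1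
          rw [Submodule.comap_map_eq, Submodule.ker_subtype, sup_bot_eq]
      rw [Nat.card_congr e, card_grass' t htu hq]
    rw [base]; ring
  · rintro A ⟨hAle, hAt⟩
    have hfinQ : Finite (V ⧸ A) := Quotient.finite _
    set π := A.mkQ with hπ
    set Sb := Su.map π with hSb
    have f1 : finrank F Sb = finrank F Su - t := by
      have h := finrank_map_add_inf_ker π Su
      rw [Submodule.ker_mkQ, inf_eq_right.mpr hAle, hAt, ← hSb] at h
      omega
    have f2 : finrank F (V ⧸ A) = finrank F V - t := by
      have h := Submodule.finrank_quotient_add_finrank A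
      rw [hAt] at h
      omega
    have e : {W : Submodule F V //
          (finrank F W = w ∧ finrank F (W ⊓ Su : Submodule F V) = t) ∧ W ⊓ Su = A} ≃
        {W' : Submodule F (V ⧸ A) // finrank F W' = w - t ∧ W' ⊓ Sb = ⊥} := by
      refine ⟨fun W => ⟨W.1.map π, ?_, ?_⟩, fun W' => ⟨Submodule.comap π W'.1, ⟨?_, ?_⟩, ?_⟩, ?_, ?_⟩
      · -- finrank of image
        obtain ⟨⟨hW1, hW2⟩, hW3⟩ := W.2
        have hAW : A ≤ W.1 := le_trans (le_of_eq hW3.symm) inf_le_left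
        have h := finrank_map_add_inf_ker π W.1
        rw [Submodule.ker_mkQ, inf_eq_right.mpr hAW, hAt, hW1] at h
        omega
      · -- trivial intersection
        obtain ⟨⟨hW1, hW2⟩, hW3⟩ := W.2
        rw [eq_bot_iff]
        intro x hx
        obtain ⟨hx1, hx2⟩ := Submodule.mem_inf.mp hx
        obtain ⟨xw, hxw, rfl⟩ := hx1
        obtain ⟨xs, hxs, hxeq⟩ := hx2
        have hker : xw - xs ∈ A := by
          rw [← Submodule.ker_mkQ A, LinearMap.mem_ker, map_sub, hxeq, sub_self]
        have hxwSu : xw ∈ Su := by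
          have hxx : xw = (xw - xs) + xs := (sub_add_cancel xw xs).symm
          rw [hxx]
          exact Submodule.add_mem _ (hAle hker) hxs
        have : xw ∈ A := le_trans (le_of_eq hW3) le_rfl ⟨hxw, hxwSu⟩
        rw [Submodule.mem_bot, Submodule.mkQ_apply, Submodule.Quotient.mk_eq_zero]
        exact this
      · -- finrank of preimage
        have hAle2 : A ≤ Submodule.comap π W'.1 := by
          intro a ha
          have : π a = 0 := by rw [Submodule.mkQ_apply, Submodule.Quotient.mk_eq_zero]; exact ha
          simp [Submodule.mem_comap, this]
        have hmc : (Submodule.comap π W'.1).map π = W'.1 := by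
          rw [Submodule.map_comap_eq, Submodule.range_mkQ, top_inf_eq]
        have h := finrank_map_add_inf_ker π (Submodule.comap π W'.1)
        rw [Submodule.ker_mkQ, inf_eq_right.mpr hAle2, hAt, hmc, W'.2.1] at h
        omega
      · -- finrank of intersection with Su
        have hc : Submodule.comap π W'.1 ⊓ Su = A := by
          apply le_antisymm
          · intro x hx
            obtain ⟨hx1, hx2⟩ := Submodule.mem_inf.mp hx
            have hmem : π x ∈ W'.1 ⊓ Sb := ⟨hx1, Submodule.mem_map_of_mem hx2⟩
            rw [W'.2.2, Submodule.mem_bot] at hmem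
            rwa [Submodule.mkQ_apply, Submodule.Quotient.mk_eq_zero] at hmem
          · refine le_inf ?_ hAle
            intro a ha
            have : π a = 0 := by rw [Submodule.mkQ_apply, Submodule.Quotient.mk_eq_zero]; exact ha
            simp [Submodule.mem_comap, this]
        rw [hc, hAt]
      · -- intersection equals A
        apply le_antisymm
        · intro x hx
          obtain ⟨hx1, hx2⟩ := Submodule.mem_inf.mp hx
          have hmem : π x ∈ W'.1 ⊓ Sb := ⟨hx1, Submodule.mem_map_of_mem hx2⟩
          rw [W'.2.2, Submodule.mem_bot] at hmem
          rwa [Submodule.mkQ_apply, Submodule.Quotient.mk_eq_zero] at hmem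
        · refine le_inf ?_ hAle
          intro a ha
          have : π a = 0 := by rw [Submodule.mkQ_apply, Submodule.Quotient.mk_eq_zero]; exact ha
          simp [Submodule.mem_comap, this]
      · -- left inverse
        intro W
        obtain ⟨⟨hW1, hW2⟩, hW3⟩ := W.2
        have hAW : A ≤ W.1 := le_trans (le_of_eq hW3.symm) inf_le_left
        apply Subtype.ext
        show Submodule.comap π (Submodule.map π W.1) = W.1
        rw [Submodule.comap_map_eq, Submodule.ker_mkQ, sup_eq_left.mpr hAW]
      · -- right inverse
        intro W'
        apply Subtype.ext
        show Submodule.map π (Submodule.comap π W'.1) = W'.1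
        rw [Submodule.map_comap_eq, Submodule.range_mkQ, top_inf_eq]
    rw [Nat.card_congr e, card_compl Sb (w - t) (by rw [f1, f2]; omega) hq, f1, f2]
    congr 2
    omega

section Phi
variable {F K : Type} [Field F] [Field K] [Algebra F K] {k : ℕ}

def phiMap (x : Fin k → K) : (Fin k → F) →ₗ[F] K where
  toFun v := ∑ r, algebraMap F K (v r) * x r
  map_add' v w := by
    simp [add_mul, Finset.sum_add_distrib]
  map_smul' a v := by
    simp only [Pi.smul_apply, smul_eq_mul, _root_.map_mul, RingHom.id_apply, Algebra.smul_def,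
      Finset.mul_sum, mul_assoc]

lemma phiMap_single (x : Fin k → K) (r : Fin k) : phiMap (F := F) x (Pi.single r 1) = x r := by
  simp [phiMap, Pi.single_apply, Finset.sum_ite_eq', apply_ite]

lemma phiMap_bijective : Function.Bijective (phiMap (F := F) (K := K) (k := k)) := by
  constructor
  · intro x y hxy
    funext r
    rw [← phiMap_single (F := F) x r, ← phiMap_single (F := F) y r, hxy]
  · intro f
    refine ⟨fun r => f (Pi.single r 1), ?_⟩
    apply LinearMap.ext
    intro v
    have hv : v = ∑ r, v r • (Pi.single r (1 : F) : Fin k → F) := by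
      ext s
      simp [Pi.single_apply, Finset.sum_ite_eq']
    rw [show (phiMap fun r => f (Pi.single r 1)) v = ∑ r, algebraMap F K (v r) * f (Pi.single r 1) from rfl]
    conv_rhs => rw [hv]
    rw [map_sum]
    refine Finset.sum_congr rfl fun r _ => ?_
    rw [_root_.map_smul, Algebra.smul_def]

end Phi

lemma card_partition {α : Type*} [Fintype α] (P : α → Prop) (g : α → ℕ) (t : Finset ℕ)
    (h : ∀ a, P a → g a ∈ t) :
    Nat.card {a // P a} = ∑ j ∈ t, Nat.card {a // P a ∧ g a = j} := by
  classical
  rw [Nat.card_eq_fintype_card, Fintype.card_subtype,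
    Finset.card_eq_sum_card_fiberwise (fun a ha => h a (Finset.mem_filter.mp ha).2)]
  refine Finset.sum_congr rfl fun j _ => ?_
  rw [Finset.filter_filter, Nat.card_eq_fintype_card, Fintype.card_subtype]

lemma card_subtype_diff {α : Type*} [Fintype α] (P Q : α → Prop) :
    Nat.card {a // P a ∧ ¬ Q a} = Nat.card {a // P a} - Nat.card {a // P a ∧ Q a} := by
  classical
  have e : {a // P a ∧ Q a} ⊕ {a // P a ∧ ¬ Q a} ≃ {a // P a} := by
    refine ⟨Sum.elim (fun a => ⟨a.1, a.2.1⟩) (fun a => ⟨a.1, a.2.1⟩),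
      fun a => if h : Q a.1 then .inl ⟨a.1, a.2, h⟩ else .inr ⟨a.1, a.2, h⟩, ?_, ?_⟩
    · rintro (⟨a, ha, hq⟩ | ⟨a, ha, hq⟩) <;> simp [hq]
    · rintro ⟨a, ha⟩
      by_cases h : Q a <;> simp [h]
  have h2 : Nat.card {a // P a ∧ Q a} + Nat.card {a // P a ∧ ¬ Q a} = Nat.card {a // P a} := by
    rw [← Nat.card_congr e, Nat.card_sum]
  omega

/-- Weight enumerator of the lifted code of the Solomon–Stiffler code with `p = 1`:
`C` is generated by the matrix `G` whose columns are exactly the vectors of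
`F_q^k ∖ S_u` (each once), `n = q^k - q^u`.  For `1 ≤ i ≤ n`, the number of weight-`i`
codewords of the lifted code over `K` is `∑_{j=1}^k A_i^{(j)} (q^ℓ-1)⋯(q^ℓ-q^{j-1})`,
where `A_i^{(j)} = q^{(u-t)(k-j-t)} [k-u, k-j-t]_q [u, t]_q` if
`n - i = q^{k-j} - q^t` for some `max(0, u-j) ≤ t ≤ u`, and `A_i^{(j)} = 0` otherwise. -/
theorem stmt_6 (q k n u ℓ : ℕ) (hk : 2 ≤ k) (hu1 : 1 ≤ u) (huk : u ≤ k - 1) (hℓ : 1 ≤ ℓ)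
    (F K : Type) [Field F] [Fintype F] [Field K] [Fintype K] [DecidableEq K] [Algebra F K]
    (hF : Fintype.card F = q) (hK : Fintype.card K = q ^ ℓ)
    (S : Submodule F (Fin k → F)) (hS : Module.finrank F S = u)
    (G : Matrix (Fin k) (Fin n) F)
    (hinj : Function.Injective fun c : Fin n => (fun r => G r c))
    (hran : Set.range (fun c : Fin n => (fun r => G r c)) = (S : Set (Fin k → F))ᶜ)
    (hn : n = q ^ k - q ^ u)
    (A : ℕ → ℕ → ℕ)
    (hA1 : ∀ i j t : ℕ, 1 ≤ i → i ≤ n → 1 ≤ j → j ≤ k → u - j ≤ t → t ≤ u →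
        ((n : ℤ) - i = (q : ℤ) ^ (k - j) - (q : ℤ) ^ t) →
        A i j = q ^ ((u - t) * (k - j - t)) *
          gbinom q ((k : ℤ) - u) ((k : ℤ) - j - t) * gbinom q u t)
    (hA0 : ∀ i j : ℕ, 1 ≤ i → i ≤ n → 1 ≤ j → j ≤ k →
        (¬ ∃ t : ℕ, u - j ≤ t ∧ t ≤ u ∧ ((n : ℤ) - i = (q : ℤ) ^ (k - j) - (q : ℤ) ^ t)) →
        A i j = 0)
    (i : ℕ) (hi1 : 1 ≤ i) (hin : i ≤ n) :
    Nat.card {c : Fin n → K //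
        (∃ x : Fin k → K, Matrix.vecMul x (G.map (algebraMap F K)) = c) ∧ hammingNorm c = i} =
      ∑ j ∈ Finset.Icc 1 k, A i j * ∏ s ∈ Finset.range j, (q ^ ℓ - q ^ s) := by
  classical
  subst hF
  set q := Fintype.card F with hqdef
  have hq2 : 1 < q := Fintype.one_lt_card
  have hqk : finrank F (Fin k → F) = k := by
    rw [Module.finrank_fintype_fun_eq_card, Fintype.card_fin]
  have hl : finrank F K = ℓ := by
    have h1 := card_eq_pow_finrank (K := F) (V := K)
    rw [hK] at h1
    exact (Nat.pow_right_injective hq2 h1.symm)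
  have huk' : u < k := by omega
  set M := G.map (algebraMap F K) with hM
  have fcol : ∀ (x : Fin k → K) (c : Fin n),
      Matrix.vecMul x M c = phiMap (F := F) x (fun r => G r c) := by
    intro x c
    show ∑ r, x r * M r c = ∑ r, algebraMap F K (G r c) * x r
    exact Finset.sum_congr rfl fun r _ => by rw [hM, Matrix.map_apply, mul_comm]
  -- span of the complement of S is everything
  have hspan : Submodule.span F ((S : Set (Fin k → F))ᶜ) = ⊤ := by
    have hSlt : S ≠ ⊤ := by
      intro h
      rw [h, finrank_top] at hS
      omega
    obtain ⟨v0, hv0⟩ : ∃ v, v ∉ S := by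
      by_contra h
      push_neg at h
      exact hSlt (Submodule.eq_top_iff'.mpr h)
    rw [eq_top_iff]
    intro w _
    by_cases hw : w ∈ S
    · have h1 : w + v0 ∉ S := fun hmem => hv0 (by simpa using S.sub_mem hmem hw)
      have h2 : w = (w + v0) - v0 := (add_sub_cancel_right w v0).symm
      rw [h2]
      exact Submodule.sub_mem _ (Submodule.subset_span h1) (Submodule.subset_span hv0)
    · exact Submodule.subset_span hw
  have finj : Function.Injective (fun x : Fin k → K => Matrix.vecMul x M) := by
    intro x y hxy
    have hker : ∀ v ∈ ((S : Set (Fin k → F))ᶜ),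
        (phiMap (F := F) x - phiMap (F := F) y) v = 0 := by
      intro v hv
      rw [← hran] at hv
      obtain ⟨c, rfl⟩ := hv
      have hxy' : Matrix.vecMul x M = Matrix.vecMul y M := hxy
      rw [LinearMap.sub_apply, ← fcol x c, ← fcol y c, congrFun hxy' c, sub_self]
    have hle : Submodule.span F ((S : Set (Fin k → F))ᶜ) ≤
        LinearMap.ker (phiMap (F := F) x - phiMap (F := F) y) :=
      Submodule.span_le.mpr (fun v hv => hker v hv)
    rw [hspan] at hle
    have h0 : phiMap (F := F) x - phiMap (F := F) y = 0 :=
      LinearMap.ker_eq_top.mp (top_unique hle)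
    exact phiMap_bijective.1 (sub_eq_zero.mp h0)
  -- reduce to counting x
  have eqA : Nat.card {c : Fin n → K //
        (∃ x : Fin k → K, Matrix.vecMul x M = c) ∧ hammingNorm c = i} =
      Nat.card {x : Fin k → K // hammingNorm (Matrix.vecMul x M) = i} := by
    refine (Nat.card_eq_of_bijective
      (fun x : {x : Fin k → K // hammingNorm (Matrix.vecMul x M) = i} =>
        (⟨Matrix.vecMul x.1 M, ⟨x.1, rfl⟩, x.2⟩ : {c : Fin n → K //
          (∃ x : Fin k → K, Matrix.vecMul x M = c) ∧ hammingNorm c = i})) ⟨?_, ?_⟩).symm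
    · intro a b hab
      exact Subtype.ext (finj (Subtype.ext_iff.mp hab))
    · rintro ⟨c, ⟨x, hx⟩, hwt⟩
      exact ⟨⟨x, by rw [hx]; exact hwt⟩, Subtype.ext hx⟩
  -- the zero-set counting function
  set Z : (Fin k → K) → ℕ := fun x =>
    Nat.card {v : Fin k → F // v ∈ LinearMap.ker (phiMap (F := F) x) ∧ v ∉ S} with hZdef
  have ecol : Fin n ≃ {v : Fin k → F // v ∉ S} := by
    refine Equiv.ofBijective (fun c => ⟨fun r => G r c, ?_⟩) ⟨?_, ?_⟩
    · have : (fun r => G r c) ∈ Set.range (fun c : Fin n => (fun r => G r c)) := ⟨c, rfl⟩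
      rw [hran] at this
      exact this
    · intro a b hab
      exact hinj (Subtype.ext_iff.mp hab)
    · rintro ⟨v, hv⟩
      have hv' : v ∈ Set.range (fun c : Fin n => (fun r => G r c)) := by
        rw [hran]; exact hv
      obtain ⟨c, hc⟩ := hv'
      exact ⟨c, Subtype.ext hc⟩
  have hZle : ∀ x, Z x ≤ n := by
    intro x
    have hinc : Function.Injective
        (fun v : {v : Fin k → F // v ∈ LinearMap.ker (phiMap (F := F) x) ∧ v ∉ S} =>
          (⟨v.1, v.2.2⟩ : {v : Fin k → F // v ∉ S})) := by
      intro a b hab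
      have h2 := congrArg (Subtype.val : {v : Fin k → F // v ∉ S} → (Fin k → F)) hab
      exact Subtype.ext h2
    calc Z x ≤ Nat.card {v : Fin k → F // v ∉ S} := Nat.card_le_card_of_injective _ hinc
      _ = n := by rw [← Nat.card_congr ecol, Nat.card_eq_fintype_card, Fintype.card_fin]
  have hwt : ∀ x : Fin k → K, hammingNorm (Matrix.vecMul x M) = n - Z x := by
    intro x
    have hzero : (Finset.univ.filter (fun c : Fin n => ¬ Matrix.vecMul x M c ≠ 0)).card = Z x := by
      have e : {c : Fin n // Matrix.vecMul x M c = 0} ≃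
          {v : Fin k → F // v ∈ LinearMap.ker (phiMap (F := F) x) ∧ v ∉ S} := by
        refine Equiv.ofBijective (fun c => ⟨fun r => G r c.1, ?_, ?_⟩) ⟨?_, ?_⟩
        · rw [LinearMap.mem_ker, ← fcol]; exact c.2
        · have : (fun r => G r c.1) ∈ Set.range (fun c : Fin n => (fun r => G r c)) :=
            ⟨c.1, rfl⟩
          rw [hran] at this
          exact this
        · intro a b hab
          exact Subtype.ext (hinj (Subtype.ext_iff.mp hab))
        · rintro ⟨v, hv1, hv2⟩
          have hv' : v ∈ Set.range (fun c : Fin n => (fun r => G r c)) := by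
            rw [hran]; exact hv2
          obtain ⟨c, hc⟩ := hv'
          have hc' : (fun r => G r c) = v := hc
          refine ⟨⟨c, ?_⟩, Subtype.ext hc'⟩
          rw [fcol, hc']
          exact LinearMap.mem_ker.mp hv1
      have hfe : (Finset.univ.filter (fun c : Fin n => ¬ Matrix.vecMul x M c ≠ 0)) =
          (Finset.univ.filter (fun c : Fin n => Matrix.vecMul x M c = 0)) := by
        apply Finset.filter_congr
        intro c _
        simp
      rw [hfe, ← Fintype.card_subtype, ← Nat.card_eq_fintype_card]
      exact Nat.card_congr e
    have htot := Finset.card_filter_add_card_filter_not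
      (s := (Finset.univ : Finset (Fin n))) (p := fun c => Matrix.vecMul x M c ≠ 0)
    rw [Finset.card_univ, Fintype.card_fin, hzero] at htot
    show (Finset.univ.filter (fun c : Fin n => Matrix.vecMul x M c ≠ 0)).card = n - Z x
    omega
  have hZval : ∀ x : Fin k → K,
      Z x = q ^ finrank F (LinearMap.ker (phiMap (F := F) x)) -
        q ^ finrank F (LinearMap.ker (phiMap (F := F) x) ⊓ S : Submodule F (Fin k → F)) := by
    intro x
    set κ := LinearMap.ker (phiMap (F := F) x) with hκ
    have h1 : Z x = Nat.card {v : Fin k → F // v ∈ κ ∧ v ∉ S} := rfl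
    rw [h1, card_subtype_diff (fun v => v ∈ κ) (fun v => v ∈ S)]
    congr 1
    · rw [Nat.card_eq_fintype_card]
      exact card_eq_pow_finrank (K := F) (V := κ)
    · have e : {v : Fin k → F // v ∈ κ ∧ v ∈ S} ≃ (κ ⊓ S : Submodule F (Fin k → F)) :=
        Equiv.subtypeEquivRight (fun v => (Submodule.mem_inf).symm)
      rw [Nat.card_congr e, Nat.card_eq_fintype_card]
      exact card_eq_pow_finrank (K := F) (V := (κ ⊓ S : Submodule F (Fin k → F)))
  -- basic rank facts
  have hrk : ∀ x : Fin k → K,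
      finrank F (LinearMap.ker (phiMap (F := F) x)) ≤ k := by
    intro x
    have h := Submodule.finrank_le (LinearMap.ker (phiMap (F := F) x))
    rwa [hqk] at h
  have hinfk : ∀ x : Fin k → K,
      finrank F (LinearMap.ker (phiMap (F := F) x) ⊓ S : Submodule F (Fin k → F)) ≤
        finrank F (LinearMap.ker (phiMap (F := F) x)) := fun x =>
    Submodule.finrank_mono inf_le_left
  have hinfu : ∀ x : Fin k → K,
      finrank F (LinearMap.ker (phiMap (F := F) x) ⊓ S : Submodule F (Fin k → F)) ≤ u := fun x =>
    hS ▸ Submodule.finrank_mono inf_le_right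
  have hlow : ∀ x : Fin k → K, u ≤
      finrank F (LinearMap.ker (phiMap (F := F) x) ⊓ S : Submodule F (Fin k → F)) +
        (k - finrank F (LinearMap.ker (phiMap (F := F) x))) := by
    intro x
    set φ := phiMap (F := F) x with hφ
    have h1 := finrank_map_add_inf_ker φ S
    have h2 : finrank F (S.map φ) ≤ finrank F (LinearMap.range φ) :=
      Submodule.finrank_mono LinearMap.map_le_range
    have h3 := LinearMap.finrank_range_add_finrank_ker φ
    rw [hqk] at h3
    have h4 : (S ⊓ LinearMap.ker φ : Submodule F (Fin k → F)) =
        (LinearMap.ker φ ⊓ S : Submodule F (Fin k → F)) := inf_comm ..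
    rw [h4, hS] at h1
    omega
  rw [eqA]
  rw [card_partition _ (fun x => k - finrank F (LinearMap.ker (phiMap (F := F) x)))
    (Finset.Icc 1 k) ?memIcc]
  case memIcc =>
    intro x hx
    show k - finrank F (LinearMap.ker (phiMap (F := F) x)) ∈ Finset.Icc 1 k
    rw [Finset.mem_Icc]
    have hdk := hrk x
    refine ⟨?_, by omega⟩
    by_contra h0
    have hd : finrank F (LinearMap.ker (phiMap (F := F) x)) = k := by omega
    have hker : LinearMap.ker (phiMap (F := F) x) = ⊤ :=
      Submodule.eq_top_of_finrank_eq (by rw [hd, hqk])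
    have hphi0 : phiMap (F := F) x = 0 := LinearMap.ker_eq_top.mp hker
    have hall : ∀ c, Matrix.vecMul x M c = 0 := by
      intro c; rw [fcol, hphi0]; rfl
    have hv0 : Matrix.vecMul x M = 0 := funext hall
    rw [hv0, hammingNorm_zero] at hx
    omega
  refine Finset.sum_congr rfl fun j hj => ?_
  obtain ⟨hj1, hjk⟩ := Finset.mem_Icc.mp hj
  by_cases hex : ∃ t' : ℕ, u - j ≤ t' ∧ t' ≤ u ∧
      ((n : ℤ) - i = (q : ℤ) ^ (k - j) - (q : ℤ) ^ t')
  · obtain ⟨t', ht'1, ht'2, heq⟩ := hex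
    have heq' : ((n : ℤ)) - i = ((q ^ (k - j) : ℕ) : ℤ) - ((q ^ t' : ℕ) : ℤ) := by
      exact_mod_cast heq
    have hin' : ((i : ℤ)) ≤ (n : ℤ) := by exact_mod_cast hin
    have hpowkt : q ^ t' ≤ q ^ (k - j) := by omega
    have htkj : t' ≤ k - j := (Nat.pow_le_pow_iff_right hq2).mp hpowkt
    have hpred : ∀ x : Fin k → K,
        (hammingNorm (Matrix.vecMul x M) = i ∧
          k - finrank F (LinearMap.ker (phiMap (F := F) x)) = j) ↔
        (finrank F (LinearMap.ker (phiMap (F := F) x)) = k - j ∧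
          finrank F (LinearMap.ker (phiMap (F := F) x) ⊓ S : Submodule F (Fin k → F)) = t') := by
      intro x
      have hdk := hrk x
      have hed := hinfk x
      have heu := hinfu x
      have hZx := hZval x
      have hwtx := hwt x
      have hZlex := hZle x
      set d := finrank F (LinearMap.ker (phiMap (F := F) x)) with hdd
      set e := finrank F (LinearMap.ker (phiMap (F := F) x) ⊓ S : Submodule F (Fin k → F)) with hee
      have hpow_ed : q ^ e ≤ q ^ d := Nat.pow_le_pow_right (by omega) hed
      constructor
      · rintro ⟨hP, hr⟩
        have hd' : d = k - j := by omega
        rw [hd'] at hZx hpow_ed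
        have hqet : q ^ e = q ^ t' := by omega
        exact ⟨hd', Nat.pow_right_injective hq2 hqet⟩
      · rintro ⟨hd', he'⟩
        rw [hd'] at hZx hpow_ed
        rw [he'] at hZx hpow_ed
        constructor
        · omega
        · omega
    refine (Nat.card_congr (Equiv.subtypeEquivRight hpred)).trans ?_
    refine (card_fiberwise (fun x : Fin k → K => LinearMap.ker (phiMap (F := F) x))
      (fun x => finrank F (LinearMap.ker (phiMap (F := F) x)) = k - j ∧
        finrank F (LinearMap.ker (phiMap (F := F) x) ⊓ S : Submodule F (Fin k → F)) = t')
      (fun W => finrank F W = k - j ∧ finrank F (W ⊓ S : Submodule F (Fin k → F)) = t')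
      (fun x hx => hx)
      (∏ s ∈ Finset.range j, (q ^ ℓ - q ^ s))
      ?_).trans ?_
    · intro W hW
      have e1 : {x : Fin k → K //
          (finrank F (LinearMap.ker (phiMap (F := F) x)) = k - j ∧
            finrank F (LinearMap.ker (phiMap (F := F) x) ⊓ S : Submodule F (Fin k → F)) = t') ∧
          LinearMap.ker (phiMap (F := F) x) = W} ≃
          {x : Fin k → K // LinearMap.ker (phiMap (F := F) x) = W} :=
        Equiv.subtypeEquivRight (fun x => ⟨fun h => h.2,
          fun h => ⟨⟨by rw [h]; exact hW.1, by rw [h]; exact hW.2⟩, h⟩⟩)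
      have e2 : {x : Fin k → K // LinearMap.ker (phiMap (F := F) x) = W} ≃
          {f : (Fin k → F) →ₗ[F] K // LinearMap.ker f = W} :=
        (Equiv.ofBijective _ (phiMap_bijective (F := F) (K := K) (k := k))).subtypeEquiv
          (fun x => Iff.rfl)
      rw [Nat.card_congr (e1.trans e2), card_ker_maps W, hqk, hl, hW.1, Nat.sub_sub_self hjk]
    · rw [card_inter S (k - j) t' hq2 (by rw [hS]; exact ht'2) htkj (by rw [hS, hqk]; omega)]
      rw [hS, hqk]
      rw [hA1 i j t' hi1 hin hj1 hjk ht'1 ht'2 heq]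
      have c1 : ((k : ℤ) - u) = ((k - u : ℕ) : ℤ) := by omega
      have c2 : ((k : ℤ) - j - t') = ((k - j - t' : ℕ) : ℤ) := by omega
      rw [c1, c2]
  · rw [hA0 i j hi1 hin hj1 hjk hex, zero_mul]
    have hemp : IsEmpty {x : Fin k → K // hammingNorm (Matrix.vecMul x M) = i ∧
        k - finrank F (LinearMap.ker (phiMap (F := F) x)) = j} := by
      constructor
      rintro ⟨x, hP, hr⟩
      apply hex
      have hdk := hrk x
      have hed := hinfk x
      have heu := hinfu x
      have hlo := hlow x
      have hZx := hZval x
      have hwtx := hwt x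
      have hZlex := hZle x
      set d := finrank F (LinearMap.ker (phiMap (F := F) x)) with hdd
      set e := finrank F (LinearMap.ker (phiMap (F := F) x) ⊓ S : Submodule F (Fin k → F)) with hee
      have hd' : d = k - j := by omega
      have hpow_ed : q ^ e ≤ q ^ d := Nat.pow_le_pow_right (by omega) hed
      rw [hd'] at hZx hpow_ed
      refine ⟨e, by omega, heu, ?_⟩
      have hgoal : ((n : ℤ)) - i = ((q ^ (k - j) : ℕ) : ℤ) - ((q ^ e : ℕ) : ℤ) := by omega
      exact_mod_cast hgoal
    exact Nat.card_of_isEmpty
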